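/- Let T be a bounded linear operator on a complex Banach space X. If σ(T) is the disjoint union of the B-Weyl spectrum σ_BW(T) and the set E(T) of isolated eigenvalues of T, then σ(T) is the disjoint union of the Weyl spectrum σ_W(T) and the set E^0(T) of isolated eigenvalues of finite multiplicity. -/

import Mathlib

open LinearMap Module

namespace SpectralPartition

variable {X : Type*} [NormedAddCommGroup X] [NormedSpace ℂ X] [CompleteSpace X]

/-- `T - λ I`. -/
noncomputable def lam (T : X →L[ℂ] X) (l : ℂ) : X →L[ℂ] X := T - l • (1 : X →L[ℂ] X)

/-- `T` maps the range of `T ^ n` into itself. -/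
theorem maps_range_pow (T : X →L[ℂ] X) (n : ℕ) :
    ∀ x ∈ LinearMap.range ((T ^ n : X →L[ℂ] X) : X →ₗ[ℂ] X), (T : X →ₗ[ℂ] X) x ∈ LinearMap.range ((T ^ n : X →L[ℂ] X) : X →ₗ[ℂ] X) := by
  rintro x ⟨y, rfl⟩
  refine ⟨T y, ?_⟩
  have h : T ^ n * T = T * T ^ n := by rw [← pow_succ, ← pow_succ']
  calc (T ^ n) (T y) = (T ^ n * T) y := (ContinuousLinearMap.mul_apply _ _ _).symm
    _ = (T * T ^ n) y := by rw [h]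
    _ = T ((T ^ n) y) := ContinuousLinearMap.mul_apply _ _ _

/-- The restriction `T_[n]` of `T` to the range of `T ^ n`. -/
noncomputable def restr (T : X →L[ℂ] X) (n : ℕ) :
    LinearMap.range ((T ^ n : X →L[ℂ] X) : X →ₗ[ℂ] X) →ₗ[ℂ] LinearMap.range ((T ^ n : X →L[ℂ] X) : X →ₗ[ℂ] X) :=
  (T : X →ₗ[ℂ] X).restrict (maps_range_pow T n)

/-- Weyl operator: Fredholm of index `0`. -/
def IsWeyl (T : X →L[ℂ] X) : Prop :=
  IsClosed ((LinearMap.range (T : X →ₗ[ℂ] X) : Submodule ℂ X) : Set X) ∧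
  FiniteDimensional ℂ (LinearMap.ker (T : X →ₗ[ℂ] X)) ∧
  FiniteDimensional ℂ (X ⧸ LinearMap.range (T : X →ₗ[ℂ] X)) ∧
  finrank ℂ (LinearMap.ker (T : X →ₗ[ℂ] X)) = finrank ℂ (X ⧸ LinearMap.range (T : X →ₗ[ℂ] X))

/-- B-Weyl operator: for some `n`, `R(T^n)` is closed and `T_[n]` is Fredholm of index `0`. -/
def IsBWeyl (T : X →L[ℂ] X) : Prop :=
  ∃ n : ℕ, IsClosed ((LinearMap.range ((T ^ n : X →L[ℂ] X) : X →ₗ[ℂ] X) : Submodule ℂ X) : Set X) ∧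
    IsClosed ((LinearMap.range ((T ^ (n + 1) : X →L[ℂ] X) : X →ₗ[ℂ] X) : Submodule ℂ X) : Set X) ∧
    FiniteDimensional ℂ (LinearMap.ker (restr T n)) ∧
    FiniteDimensional ℂ (↥(LinearMap.range ((T ^ n : X →L[ℂ] X) : X →ₗ[ℂ] X)) ⧸ LinearMap.range (restr T n)) ∧
    finrank ℂ (LinearMap.ker (restr T n)) =
      finrank ℂ (↥(LinearMap.range ((T ^ n : X →L[ℂ] X) : X →ₗ[ℂ] X)) ⧸ LinearMap.range (restr T n))

/-- Weyl spectrum. -/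
noncomputable def σW (T : X →L[ℂ] X) : Set ℂ := {l | ¬ IsWeyl (lam T l)}

/-- B-Weyl spectrum. -/
noncomputable def σBW (T : X →L[ℂ] X) : Set ℂ := {l | ¬ IsBWeyl (lam T l)}

/-- `l` is an isolated point of the set `s`. -/
def IsolatedIn (l : ℂ) (s : Set ℂ) : Prop := l ∈ s ∧ ∃ U ∈ nhds l, U ∩ s = {l}

/-- Approximate point spectrum: `T - λ` is not bounded below. -/
noncomputable def σa (T : X →L[ℂ] X) : Set ℂ :=
  {l | ¬ ∃ c > (0 : ℝ), ∀ x : X, c * ‖x‖ ≤ ‖lam T l x‖}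

/-- Eigenvalues of `T` isolated in the spectrum. -/
noncomputable def Espec (T : X →L[ℂ] X) : Set ℂ :=
  {l | LinearMap.ker (lam T l : X →ₗ[ℂ] X) ≠ ⊥ ∧ IsolatedIn l (spectrum ℂ T)}

/-- Eigenvalues of finite multiplicity isolated in the spectrum. -/
noncomputable def E0spec (T : X →L[ℂ] X) : Set ℂ :=
  {l | l ∈ Espec T ∧ FiniteDimensional ℂ (LinearMap.ker (lam T l : X →ₗ[ℂ] X))}

/-- Eigenvalues of `T` isolated in the approximate point spectrum. -/
noncomputable def Ea (T : X →L[ℂ] X) : Set ℂ :=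
  {l | LinearMap.ker (lam T l : X →ₗ[ℂ] X) ≠ ⊥ ∧ IsolatedIn l (σa T)}

/-- Eigenvalues of finite multiplicity isolated in the approximate point spectrum. -/
noncomputable def Ea0 (T : X →L[ℂ] X) : Set ℂ :=
  {l | l ∈ Ea T ∧ FiniteDimensional ℂ (LinearMap.ker (lam T l : X →ₗ[ℂ] X))}

/-- The kernels of powers of `S` stabilize at `n` (ascent ≤ n). -/
def KerStab (S : X →L[ℂ] X) (n : ℕ) : Prop :=
  LinearMap.ker ((S ^ n : X →L[ℂ] X) : X →ₗ[ℂ] X) = LinearMap.ker ((S ^ (n + 1) : X →L[ℂ] X) : X →ₗ[ℂ] X)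

/-- The ranges of powers of `S` stabilize at `n` (descent ≤ n). -/
def RanStab (S : X →L[ℂ] X) (n : ℕ) : Prop :=
  LinearMap.range ((S ^ n : X →L[ℂ] X) : X →ₗ[ℂ] X) = LinearMap.range ((S ^ (n + 1) : X →L[ℂ] X) : X →ₗ[ℂ] X)

/-- Drazin invertible: finite ascent and finite descent. -/
def IsDrazinInv (S : X →L[ℂ] X) : Prop :=
  (∃ n, KerStab S n) ∧ (∃ n, RanStab S n)

/-- `l` is a pole of the resolvent of `T`. -/
noncomputable def IsPole (T : X →L[ℂ] X) (l : ℂ) : Prop :=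
  l ∈ spectrum ℂ T ∧ IsDrazinInv (lam T l)

/-- Set of poles of the resolvent of `T`. -/
noncomputable def Poles (T : X →L[ℂ] X) : Set ℂ := {l | IsPole T l}

/-- Set of poles of finite rank of `T`. -/
noncomputable def Poles0 (T : X →L[ℂ] X) : Set ℂ :=
  {l | IsPole T l ∧ FiniteDimensional ℂ (LinearMap.ker (lam T l : X →ₗ[ℂ] X))}

/-- Drazin spectrum. -/
noncomputable def σD (T : X →L[ℂ] X) : Set ℂ := {l | ¬ IsDrazinInv (lam T l)}

/-- Browder operator: Fredholm of finite ascent and descent. -/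
def IsBrowder (S : X →L[ℂ] X) : Prop :=
  IsClosed ((LinearMap.range (S : X →ₗ[ℂ] X) : Submodule ℂ X) : Set X) ∧
  FiniteDimensional ℂ (LinearMap.ker (S : X →ₗ[ℂ] X)) ∧
  FiniteDimensional ℂ (X ⧸ LinearMap.range (S : X →ₗ[ℂ] X)) ∧
  (∃ n, KerStab S n) ∧ (∃ n, RanStab S n)

/-- Browder spectrum. -/
noncomputable def σB (T : X →L[ℂ] X) : Set ℂ := {l | ¬ IsBrowder (lam T l)}

/-- Upper semi-Weyl: upper semi-Fredholm with index ≤ 0. -/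
def IsUpperSemiWeyl (S : X →L[ℂ] X) : Prop :=
  IsClosed ((LinearMap.range (S : X →ₗ[ℂ] X) : Submodule ℂ X) : Set X) ∧
  FiniteDimensional ℂ (LinearMap.ker (S : X →ₗ[ℂ] X)) ∧
  Module.rank ℂ (LinearMap.ker (S : X →ₗ[ℂ] X)) ≤ Module.rank ℂ (X ⧸ LinearMap.range (S : X →ₗ[ℂ] X))

/-- Upper semi-Weyl spectrum `σ_{SF₊⁻}`. -/
noncomputable def σSF (T : X →L[ℂ] X) : Set ℂ := {l | ¬ IsUpperSemiWeyl (lam T l)}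

/-- Upper semi-B-Weyl: for some `n`, `R(S^n)` is closed and `S_[n]` is
upper semi-Fredholm with index ≤ 0. -/
def IsUpperSemiBWeyl (S : X →L[ℂ] X) : Prop :=
  ∃ n : ℕ, IsClosed ((LinearMap.range ((S ^ n : X →L[ℂ] X) : X →ₗ[ℂ] X) : Submodule ℂ X) : Set X) ∧
    IsClosed ((LinearMap.range ((S ^ (n + 1) : X →L[ℂ] X) : X →ₗ[ℂ] X) : Submodule ℂ X) : Set X) ∧
    FiniteDimensional ℂ (LinearMap.ker (restr S n)) ∧
    Module.rank ℂ (LinearMap.ker (restr S n)) ≤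
      Module.rank ℂ (↥(LinearMap.range ((S ^ n : X →L[ℂ] X) : X →ₗ[ℂ] X)) ⧸ LinearMap.range (restr S n))

/-- Upper semi-B-Weyl spectrum `σ_{SBF₊⁻}`. -/
noncomputable def σSBF (T : X →L[ℂ] X) : Set ℂ := {l | ¬ IsUpperSemiBWeyl (lam T l)}

/-- `l` is a left pole of `T`: `l ∈ σ_a(T)`, the ascent `a` of `T - l` is finite
and `R((T-l)^{a+1})` is closed. -/
noncomputable def IsLeftPole (T : X →L[ℂ] X) (l : ℂ) : Prop :=
  l ∈ σa T ∧ ∃ n : ℕ, KerStab (lam T l) n ∧ (∀ m < n, ¬ KerStab (lam T l) m) ∧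
    IsClosed ((LinearMap.range (((lam T l) ^ (n + 1) : X →L[ℂ] X) : X →ₗ[ℂ] X) : Submodule ℂ X) : Set X)

/-- Set of left poles of `T`. -/
noncomputable def PolesA (T : X →L[ℂ] X) : Set ℂ := {l | IsLeftPole T l}

/-- Set of left poles of `T` of finite rank. -/
noncomputable def PolesA0 (T : X →L[ℂ] X) : Set ℂ :=
  {l | IsLeftPole T l ∧ FiniteDimensional ℂ (LinearMap.ker (lam T l : X →ₗ[ℂ] X))}

end SpectralPartition

open SpectralPartition LinearMap Module Submodule
set_option linter.unusedSectionVars false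
set_option maxHeartbeats 1000000
set_option synthInstance.maxHeartbeats 1000000

theorem findim_ext {M : Type*} [AddCommGroup M] [Module ℂ M] (p : Submodule ℂ M)
    (h1 : FiniteDimensional ℂ p) (h2 : FiniteDimensional ℂ (M ⧸ p)) :
    FiniteDimensional ℂ M := by
  have : Module.rank ℂ M < Cardinal.aleph0 := by
    rw [← rank_quotient_add_rank_of_divisionRing p]
    exact Cardinal.add_lt_aleph0 (Module.rank_lt_aleph0_iff.mpr h2)
      (Module.rank_lt_aleph0_iff.mpr h1)
  exact Module.rank_lt_aleph0_iff.mp this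

namespace SpectralPartition
variable {X : Type*} [NormedAddCommGroup X] [NormedSpace ℂ X] [CompleteSpace X]
  (S : X →L[ℂ] X)

theorem pow_succ_apply' (m : ℕ) (x : X) : (S ^ (m+1)) x = S ((S ^ m) x) := by
  rw [pow_succ']; rfl

theorem map_range_pow' (m : ℕ) :
    Submodule.map (S : X →ₗ[ℂ] X) (LinearMap.range ((S ^ m : X →L[ℂ] X) : X →ₗ[ℂ] X)) = LinearMap.range ((S ^ (m+1) : X →L[ℂ] X) : X →ₗ[ℂ] X) := by
  ext x
  constructor
  · rintro ⟨-, ⟨y, rfl⟩, rfl⟩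
    exact ⟨y, pow_succ_apply' S m y⟩
  · rintro ⟨y, rfl⟩
    exact ⟨(S ^ m) y, ⟨y, rfl⟩, (pow_succ_apply' S m y).symm⟩

theorem range_pow_le' (m : ℕ) :
    LinearMap.range ((S ^ (m+1) : X →L[ℂ] X) : X →ₗ[ℂ] X) ≤ LinearMap.range ((S ^ m : X →L[ℂ] X) : X →ₗ[ℂ] X) := by
  rintro x ⟨y, rfl⟩
  exact ⟨S y, by rw [pow_succ]; rfl⟩

/-- `ker S ∩ R(S^m)`. -/
noncomputable def Kk (m : ℕ) : Submodule ℂ X :=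
  LinearMap.ker (S : X →ₗ[ℂ] X) ⊓ LinearMap.range ((S ^ m : X →L[ℂ] X) : X →ₗ[ℂ] X)

/-- `R(S^m)/R(S^{m+1})` inside `X ⧸ R(S^{m+1})`. -/
noncomputable def Qq (m : ℕ) : Submodule ℂ (X ⧸ LinearMap.range ((S ^ (m+1) : X →L[ℂ] X) : X →ₗ[ℂ] X)) :=
  (LinearMap.range ((S ^ m : X →L[ℂ] X) : X →ₗ[ℂ] X)).map (LinearMap.range ((S ^ (m+1) : X →L[ℂ] X) : X →ₗ[ℂ] X)).mkQ

theorem Kk_le (m : ℕ) : Kk S (m+1) ≤ Kk S m :=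
  inf_le_inf_left _ (range_pow_le' S m)

theorem step (m : ℕ) (hker : FiniteDimensional ℂ (LinearMap.ker (S : X →ₗ[ℂ] X)))
    (hQ : FiniteDimensional ℂ (Qq S (m+1))) :
    FiniteDimensional ℂ (Qq S m) ∧
      finrank ℂ (Qq S m) + finrank ℂ (Kk S (m+1)) =
        finrank ℂ (Qq S (m+1)) + finrank ℂ (Kk S m) := by
  haveI := hker
  set S' : X →ₗ[ℂ] X := (S : X →ₗ[ℂ] X) with hS'
  set q1 := LinearMap.range ((S ^ (m+1) : X →L[ℂ] X) : X →ₗ[ℂ] X) with hq1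
  set q2 := LinearMap.range ((S ^ (m+2) : X →L[ℂ] X) : X →ₗ[ℂ] X) with hq2
  have hcond : q1 ≤ LinearMap.ker (q2.mkQ ∘ₗ S') := by
    rw [LinearMap.ker_comp, Submodule.ker_mkQ]
    exact Submodule.map_le_iff_le_comap.mp (le_of_eq (map_range_pow' S (m+1)))
  set σ : (X ⧸ q1) →ₗ[ℂ] X ⧸ q2 := q1.liftQ (q2.mkQ ∘ₗ S') hcond with hσ
  set τ : (Qq S m) →ₗ[ℂ] X ⧸ q2 := σ ∘ₗ (Qq S m).subtype with hτ
  -- kernel of σ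
  have hkerσ : LinearMap.ker σ = (LinearMap.ker S').map q1.mkQ := by
    rw [hσ, Submodule.ker_liftQ, LinearMap.ker_comp, Submodule.ker_mkQ, hq2,
      ← map_range_pow' S (m+1), Submodule.comap_map_eq, Submodule.map_sup,
      ← hq1, Submodule.mkQ_map_self, bot_sup_eq]
  -- intersection with Qq S m
  have hinf : LinearMap.ker σ ⊓ Qq S m = (Kk S m).map q1.mkQ := by
    rw [hkerσ]
    have h1 : (LinearMap.ker S').map q1.mkQ ⊓ Qq S m =
        LinearMap.range q1.mkQ ⊓ ((LinearMap.ker S').map q1.mkQ ⊓ Qq S m) := by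
      rw [Submodule.range_mkQ, top_inf_eq]
    rw [h1, ← Submodule.map_comap_eq, Submodule.comap_inf, Qq,
      Submodule.comap_map_mkQ, Submodule.comap_map_mkQ,
      sup_eq_right.mpr (range_pow_le' S m),
      sup_inf_assoc_of_le _ (range_pow_le' S m : q1 ≤ LinearMap.range ((S ^ m : X →L[ℂ] X) : X →ₗ[ℂ] X)),
      Submodule.map_sup, Submodule.mkQ_map_self, bot_sup_eq]
    rfl
  have hkerτ : LinearMap.ker τ =
      Submodule.comap (Qq S m).subtype ((Kk S m).map q1.mkQ) := by
    rw [hτ, LinearMap.ker_comp, ← hinf]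
    ext x
    simp only [Submodule.mem_comap, Submodule.mem_inf]
    exact ⟨fun h => ⟨h, x.2⟩, fun h => h.1⟩
  have hmaple : (Kk S m).map q1.mkQ ≤ Qq S m :=
    Submodule.map_mono (inf_le_right : Kk S m ≤ LinearMap.range ((S ^ m : X →L[ℂ] X) : X →ₗ[ℂ] X))
  have ekerτ : (LinearMap.ker τ) ≃ₗ[ℂ] ((Kk S m).map q1.mkQ) :=
    (LinearEquiv.ofEq _ _ hkerτ).trans (Submodule.comapSubtypeEquivOfLe hmaple)
  -- range of τ
  have hrangeτ : LinearMap.range τ = Qq S (m+1) := by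
    rw [hτ, LinearMap.range_comp, Submodule.range_subtype, Qq,
      ← Submodule.map_comp, Submodule.liftQ_mkQ, Submodule.map_comp,
      map_range_pow' S m]
    rfl
  -- dimension count for map of Kk S m
  haveI hKm : FiniteDimensional ℂ (Kk S m) :=
    Submodule.finiteDimensional_of_le (inf_le_left : Kk S m ≤ LinearMap.ker (S : X →ₗ[ℂ] X))
  haveI hKm1 : FiniteDimensional ℂ (Kk S (m+1)) :=
    Submodule.finiteDimensional_of_le (inf_le_left : Kk S (m+1) ≤ LinearMap.ker (S : X →ₗ[ℂ] X))
  set g2 : (Kk S m) →ₗ[ℂ] X ⧸ q1 := q1.mkQ ∘ₗ (Kk S m).subtype with hg2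
  have hrg2 : LinearMap.range g2 = (Kk S m).map q1.mkQ := by
    rw [hg2, LinearMap.range_comp, Submodule.range_subtype]
  have hkg2 : LinearMap.ker g2 = Submodule.comap (Kk S m).subtype (Kk S (m+1)) := by
    rw [hg2, LinearMap.ker_comp, Submodule.ker_mkQ]
    ext x
    have hx : (x : X) ∈ LinearMap.ker (S : X →ₗ[ℂ] X) ⊓ LinearMap.range ((S ^ m : X →L[ℂ] X) : X →ₗ[ℂ] X) := x.2
    rw [Submodule.mem_inf] at hx
    constructor
    · intro h
      exact ⟨hx.1, h⟩
    · intro h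
      exact h.2
  have ekg2 : (LinearMap.ker g2) ≃ₗ[ℂ] (Kk S (m+1)) :=
    (LinearEquiv.ofEq _ _ hkg2).trans (Submodule.comapSubtypeEquivOfLe (Kk_le S m))
  have hcount : finrank ℂ ((Kk S m).map q1.mkQ) + finrank ℂ (Kk S (m+1)) =
      finrank ℂ (Kk S m) := by
    have := LinearMap.finrank_range_add_finrank_ker g2
    rw [hrg2] at this
    rw [← this, ekg2.finrank_eq]
  haveI hmapfd : FiniteDimensional ℂ ((Kk S m).map q1.mkQ) := by
    rw [← hrg2]; infer_instance
  haveI hkerτfd : FiniteDimensional ℂ (LinearMap.ker τ) := ekerτ.symm.finiteDimensional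
  -- finite dimensionality of Qq S m
  haveI hQm : FiniteDimensional ℂ (Qq S m) := by
    refine findim_ext (LinearMap.ker τ) hkerτfd ?_
    have e2 : ((Qq S m) ⧸ LinearMap.ker τ) ≃ₗ[ℂ] LinearMap.range τ :=
      τ.quotKerEquivRange
    have e3 : (LinearMap.range τ) ≃ₗ[ℂ] Qq S (m+1) := LinearEquiv.ofEq _ _ hrangeτ
    exact (e2.trans e3).symm.finiteDimensional
  refine ⟨hQm, ?_⟩
  have h4 := LinearMap.finrank_range_add_finrank_ker τ
  have h5 : finrank ℂ (LinearMap.range τ) = finrank ℂ (Qq S (m+1)) := by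
    rw [hrangeτ]
  have h6 : finrank ℂ (LinearMap.ker τ) = finrank ℂ ((Kk S m).map q1.mkQ) :=
    ekerτ.finrank_eq
  omega

/-- kernel of the restriction is `ker S ⊓ R(S^n)`. -/
noncomputable def kerRestrEquiv (n : ℕ) :
    (LinearMap.ker (restr S n)) ≃ₗ[ℂ] ↥(LinearMap.ker (S : X →ₗ[ℂ] X) ⊓ LinearMap.range ((S ^ n : X →L[ℂ] X) : X →ₗ[ℂ] X)) := by
  have h1 : LinearMap.ker (restr S n) =
      Submodule.comap (LinearMap.range ((S ^ n : X →L[ℂ] X) : X →ₗ[ℂ] X)).subtype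
        (LinearMap.ker (S : X →ₗ[ℂ] X) ⊓ LinearMap.range ((S ^ n : X →L[ℂ] X) : X →ₗ[ℂ] X)) := by
    rw [restr, LinearMap.ker_restrict]
    ext x
    simp only [Submodule.mem_comap, Submodule.mem_inf, LinearMap.mem_ker]
    exact ⟨fun h => ⟨h, x.2⟩, fun h => h.1⟩
  exact (LinearEquiv.ofEq _ _ h1).trans
    (Submodule.comapSubtypeEquivOfLe inf_le_right)

/-- The same, stated for `Kk`. -/
noncomputable def kerRestrEquiv' (n : ℕ) :
    (LinearMap.ker (restr S n)) ≃ₗ[ℂ] (Kk S n) := kerRestrEquiv S n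

theorem range_restr_eq (n : ℕ) :
    LinearMap.range (restr S n) =
      Submodule.comap (LinearMap.range ((S ^ n : X →L[ℂ] X) : X →ₗ[ℂ] X)).subtype (LinearMap.range ((S ^ (n+1) : X →L[ℂ] X) : X →ₗ[ℂ] X)) := by
  ext x
  simp only [Submodule.mem_comap, Submodule.coe_subtype]
  constructor
  · rintro ⟨y, rfl⟩
    obtain ⟨z, hz⟩ := y.2
    refine ⟨z, ?_⟩
    have h : (restr S n y : X) = S (y : X) := rfl
    rw [h, ← hz]
    exact pow_succ_apply' S n z
  · rintro ⟨z, hz⟩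
    refine ⟨⟨(S ^ n) z, ⟨z, rfl⟩⟩, ?_⟩
    apply Subtype.ext
    have h : (restr S n ⟨(S ^ n) z, ⟨z, rfl⟩⟩ : X) = S ((S ^ n) z) := rfl
    rw [h, ← pow_succ_apply']
    exact hz

/-- coker of restriction is `R(S^n) / R(S^{n+1})` realized inside `X ⧸ R(S^{n+1})`. -/
noncomputable def cokerRestrEquiv (n : ℕ) :
    (↥(LinearMap.range ((S ^ n : X →L[ℂ] X) : X →ₗ[ℂ] X)) ⧸ LinearMap.range (restr S n)) ≃ₗ[ℂ] (Qq S n) := by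
  set g : ↥(LinearMap.range ((S ^ n : X →L[ℂ] X) : X →ₗ[ℂ] X)) →ₗ[ℂ] X ⧸ LinearMap.range ((S ^ (n+1) : X →L[ℂ] X) : X →ₗ[ℂ] X) :=
    (LinearMap.range ((S ^ (n+1) : X →L[ℂ] X) : X →ₗ[ℂ] X)).mkQ ∘ₗ (LinearMap.range ((S ^ n : X →L[ℂ] X) : X →ₗ[ℂ] X)).subtype with hg
  have hker : LinearMap.ker g = LinearMap.range (restr S n) := by
    rw [hg, LinearMap.ker_comp, Submodule.ker_mkQ, range_restr_eq]
  have hrange : LinearMap.range g = Qq S n := by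
    rw [hg, LinearMap.range_comp, Submodule.range_subtype]
    rfl
  exact (Submodule.quotEquivOfEq _ _ hker.symm).trans
    ((g.quotKerEquivRange).trans (LinearEquiv.ofEq _ _ hrange))

theorem telescope (n : ℕ) (hker : FiniteDimensional ℂ (LinearMap.ker (S : X →ₗ[ℂ] X)))
    (hQn : FiniteDimensional ℂ (Qq S n)) (j : ℕ) :
    FiniteDimensional ℂ (Qq S (n - j)) ∧
      finrank ℂ (Qq S (n - j)) + finrank ℂ (Kk S n) =
        finrank ℂ (Qq S n) + finrank ℂ (Kk S (n - j)) := by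
  induction j with
  | zero => rw [Nat.sub_zero]; exact ⟨hQn, rfl⟩
  | succ j ih =>
    by_cases h : n ≤ j
    · have e : n - (j + 1) = n - j := by omega
      rw [e]
      exact ih
    · have e : n - (j + 1) + 1 = n - j := by omega
      obtain ⟨ihfd, iheq⟩ := ih
      rw [← e] at ihfd iheq
      obtain ⟨hfd, heq⟩ := step S (n - (j + 1)) hker ihfd
      exact ⟨hfd, by omega⟩

theorem sup_of_fd_quot {p q : Submodule ℂ X} (hle : q ≤ p)
    (hfd : FiniteDimensional ℂ (p.map q.mkQ)) :
    ∃ F : Submodule ℂ X, FiniteDimensional ℂ F ∧ p = q ⊔ F := by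
  classical
  obtain ⟨s, hs⟩ := (Submodule.fg_iff_finiteDimensional _).mpr hfd
  have hsub : (s : Set (X ⧸ q)) ⊆ (p.map q.mkQ : Set (X ⧸ q)) := by
    rw [← hs]; exact Submodule.subset_span
  choose f hf1 hf2 using fun (y : (s : Set (X ⧸ q))) => hsub y.2
  refine ⟨Submodule.span ℂ (Set.range f), FiniteDimensional.span_of_finite ℂ
    (Set.finite_range f), le_antisymm ?_ (sup_le hle (Submodule.span_le.mpr ?_))⟩
  · intro x hx
    have hmk : q.mkQ x ∈ Submodule.span ℂ (s : Set (X ⧸ q)) := by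
      rw [hs]; exact ⟨x, hx, rfl⟩
    have himg : (s : Set (X ⧸ q)) ⊆
        ((Submodule.span ℂ (Set.range f)).map q.mkQ : Set (X ⧸ q)) := by
      intro y hy
      exact ⟨f ⟨y, hy⟩, Submodule.subset_span ⟨⟨y, hy⟩, rfl⟩, hf2 ⟨y, hy⟩⟩
    have hmem : q.mkQ x ∈ (Submodule.span ℂ (Set.range f)).map q.mkQ :=
      (Submodule.span_le.mpr himg) hmk
    obtain ⟨z, hz1, hz2⟩ := hmem
    have hq : x - z ∈ q := by
      rw [← Submodule.ker_mkQ q, LinearMap.mem_ker, map_sub, hz2, sub_self]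
    have hxe : x = (x - z) + z := by abel
    rw [hxe]
    exact Submodule.add_mem_sup hq hz1
  · rintro y ⟨i, rfl⟩
    exact hf1 i

theorem isClosed_sup_fd {q F : Submodule ℂ X} (hq : IsClosed (q : Set X))
    (hF : FiniteDimensional ℂ F) :
    IsClosed ((q ⊔ F : Submodule ℂ X) : Set X) := by
  haveI := hq
  haveI := hF
  have hcont : Continuous q.mkQ := by
    apply AddMonoidHomClass.continuous_of_bound q.mkQ 1
    intro x
    rw [one_mul]
    exact Submodule.Quotient.norm_mk_le q x
  have hclosed : IsClosed ((F.map q.mkQ : Submodule ℂ (X ⧸ q)) : Set (X ⧸ q)) :=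
    Submodule.closed_of_finiteDimensional _
  have heq : ((q ⊔ F : Submodule ℂ X) : Set X) = q.mkQ ⁻¹' (F.map q.mkQ : Set (X ⧸ q)) := by
    have h2 : Submodule.comap q.mkQ (F.map q.mkQ) = q ⊔ F := Submodule.comap_map_mkQ q F
    rw [← h2]
    rfl
  rw [heq]
  exact hclosed.preimage hcont

theorem range_pow_zero : LinearMap.range ((S ^ 0 : X →L[ℂ] X) : X →ₗ[ℂ] X) = (⊤ : Submodule ℂ X) := by
  rw [eq_top_iff]
  intro x _
  exact ⟨x, by rw [pow_zero]; rfl⟩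

theorem Kk_zero : Kk S 0 = LinearMap.ker (S : X →ₗ[ℂ] X) := by
  rw [Kk, range_pow_zero, inf_top_eq]

theorem Qq_zero : Qq S 0 = ⊤ := by
  rw [Qq, range_pow_zero, Submodule.map_top, Submodule.range_mkQ]

theorem range_one_eq : LinearMap.range ((S ^ 1 : X →L[ℂ] X) : X →ₗ[ℂ] X) = LinearMap.range (S : X →ₗ[ℂ] X) := by
  rw [pow_one]

/-- `ker (restr S 0) ≃ ker S`. -/
noncomputable def kerRestr0Equiv : (LinearMap.ker (restr S 0)) ≃ₗ[ℂ] LinearMap.ker (S : X →ₗ[ℂ] X) :=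
  (kerRestrEquiv S 0).trans (LinearEquiv.ofEq _ _ (Kk_zero S))

/-- coker of `restr S 0` is `X ⧸ range S`. -/
noncomputable def cokerRestr0Equiv :
    (↥(LinearMap.range ((S ^ 0 : X →L[ℂ] X) : X →ₗ[ℂ] X)) ⧸ LinearMap.range (restr S 0)) ≃ₗ[ℂ]
      (X ⧸ LinearMap.range (S : X →ₗ[ℂ] X)) :=
  (cokerRestrEquiv S 0).trans (((LinearEquiv.ofEq _ _ (Qq_zero S)).trans
    (Submodule.topEquiv)).trans (Submodule.quotEquivOfEq _ _ (range_one_eq S)))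

theorem weyl_to_bweyl (hW : IsWeyl S) : IsBWeyl S := by
  obtain ⟨hclosed, hk, hcok, heq⟩ := hW
  haveI := hk
  haveI := hcok
  refine ⟨0, ?_, ?_, ?_, ?_, ?_⟩
  · have h : ((LinearMap.range ((S ^ 0 : X →L[ℂ] X) : X →ₗ[ℂ] X) : Submodule ℂ X) : Set X) = Set.univ := by
      rw [range_pow_zero]; rfl
    rw [h]; exact isClosed_univ
  · have h : ((LinearMap.range ((S ^ (0 + 1) : X →L[ℂ] X) : X →ₗ[ℂ] X) : Submodule ℂ X) : Set X) =
        ((LinearMap.range (S : X →ₗ[ℂ] X) : Submodule ℂ X) : Set X) := by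
      rw [zero_add, range_one_eq]
    rw [h]; exact hclosed
  · exact (kerRestr0Equiv S).symm.finiteDimensional
  · exact (cokerRestr0Equiv S).symm.finiteDimensional
  · rw [(kerRestr0Equiv S).finrank_eq, (cokerRestr0Equiv S).finrank_eq]
    exact heq

theorem bweyl_to_weyl (hB : IsBWeyl S) (hker : FiniteDimensional ℂ (LinearMap.ker (S : X →ₗ[ℂ] X))) :
    IsWeyl S := by
  obtain ⟨n, hc1, hc2, hk, hq, heq⟩ := hB
  haveI := hk
  haveI := hq
  haveI := hker
  have hQn : FiniteDimensional ℂ (Qq S n) := (cokerRestrEquiv S n).finiteDimensional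
  have hfr : finrank ℂ (Kk S n) = finrank ℂ (Qq S n) := by
    rw [← (kerRestrEquiv' S n).finrank_eq, ← (cokerRestrEquiv S n).finrank_eq]
    exact heq
  -- telescoped data at 0
  have tel := telescope S n hker hQn n
  rw [Nat.sub_self] at tel
  obtain ⟨hQ0, hid⟩ := tel
  haveI := hQ0
  -- identify Qq S 0 with the full quotient
  have eQ0 : (Qq S 0) ≃ₗ[ℂ] (X ⧸ LinearMap.range (S : X →ₗ[ℂ] X)) :=
    ((LinearEquiv.ofEq _ _ (Qq_zero S)).trans (Submodule.topEquiv)).trans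
      (Submodule.quotEquivOfEq _ _ (range_one_eq S))
  have eK0 : (Kk S 0) ≃ₗ[ℂ] LinearMap.ker (S : X →ₗ[ℂ] X) := LinearEquiv.ofEq _ _ (Kk_zero S)
  -- closedness of the range
  have hsup : ∀ j, j ≤ n → ∃ F : Submodule ℂ X, FiniteDimensional ℂ F ∧
      LinearMap.range ((S ^ (n + 1 - j) : X →L[ℂ] X) : X →ₗ[ℂ] X) = LinearMap.range ((S ^ (n + 1) : X →L[ℂ] X) : X →ₗ[ℂ] X) ⊔ F := by
    intro j
    induction j with
    | zero =>
      intro _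
      exact ⟨⊥, inferInstance, by simp⟩
    | succ j ih =>
      intro hj
      obtain ⟨F, hF, hFe⟩ := ih (le_of_lt (Nat.lt_of_succ_le hj))
      have e1 : n + 1 - (j + 1) + 1 = n + 1 - j := by omega
      have hQm : FiniteDimensional ℂ (Qq S (n + 1 - (j + 1))) := by
        have e2 : n + 1 - (j + 1) = n - j := by omega
        rw [e2]
        exact (telescope S n hker hQn j).1
      obtain ⟨F', hF', hFe'⟩ := sup_of_fd_quot
        (range_pow_le' S (n + 1 - (j + 1))) hQm
      refine ⟨F ⊔ F', inferInstance, ?_⟩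
      rw [hFe', e1, hFe, sup_assoc]
  obtain ⟨F, hF, hFe⟩ := hsup n (le_refl n)
  have hone : n + 1 - n = 1 := by omega
  rw [hone] at hFe
  have hclosed : IsClosed ((LinearMap.range (S : X →ₗ[ℂ] X) : Submodule ℂ X) : Set X) := by
    have : ((LinearMap.range (S : X →ₗ[ℂ] X) : Submodule ℂ X) : Set X) =
        ((LinearMap.range ((S ^ (n + 1) : X →L[ℂ] X) : X →ₗ[ℂ] X) ⊔ F : Submodule ℂ X) : Set X) := by
      rw [← hFe, range_one_eq]
    rw [this]
    exact isClosed_sup_fd hc2 hF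
  refine ⟨hclosed, hker, eQ0.finiteDimensional, ?_⟩
  have h1 : finrank ℂ (LinearMap.ker (S : X →ₗ[ℂ] X)) = finrank ℂ (Kk S 0) := eK0.finrank_eq.symm
  have h2 : finrank ℂ (Qq S 0) = finrank ℂ (X ⧸ LinearMap.range (S : X →ₗ[ℂ] X)) := eQ0.finrank_eq
  omega

theorem isWeyl_of_not_spectrum (T : X →L[ℂ] X) (l : ℂ) (h : l ∉ spectrum ℂ T) :
    IsWeyl (lam T l) := by
  rw [spectrum.notMem_iff] at h
  have hu : IsUnit (lam T l) := by
    have : lam T l = -(algebraMap ℂ (X →L[ℂ] X) l - T) := by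
      rw [lam, Algebra.algebraMap_eq_smul_one]
      abel
    rw [this]
    exact h.neg
  obtain ⟨u, hu⟩ := hu
  have hbij : Function.Bijective (lam T l) := by
    constructor
    · intro x y hxy
      have h1 : (u⁻¹ * u : X →L[ℂ] X) x = (u⁻¹ * u : X →L[ℂ] X) y := by
        rw [ContinuousLinearMap.mul_apply, ContinuousLinearMap.mul_apply, hu, hxy]
      rwa [u.inv_mul, ContinuousLinearMap.one_apply, ContinuousLinearMap.one_apply] at h1
    · intro y
      refine ⟨(↑u⁻¹ : X →L[ℂ] X) y, ?_⟩
      have h1 : ((u : X →L[ℂ] X) * (↑u⁻¹ : X →L[ℂ] X)) y = y := by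
        rw [u.mul_inv, ContinuousLinearMap.one_apply]
      rw [ContinuousLinearMap.mul_apply, hu] at h1
      exact h1
  have hrange : LinearMap.range (lam T l : X →ₗ[ℂ] X) = ⊤ := LinearMap.range_eq_top.mpr hbij.2
  have hkernel : LinearMap.ker (lam T l : X →ₗ[ℂ] X) = ⊥ := LinearMap.ker_eq_bot.mpr hbij.1
  haveI : Subsingleton (X ⧸ LinearMap.range (lam T l : X →ₗ[ℂ] X)) := by
    rw [Submodule.Quotient.subsingleton_iff]
    exact hrange
  refine ⟨?_, ?_, ?_, ?_⟩
  · have : ((LinearMap.range (lam T l : X →ₗ[ℂ] X) : Submodule ℂ X) : Set X) = Set.univ := by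
      rw [hrange]; rfl
    rw [this]; exact isClosed_univ
  · rw [hkernel]; infer_instance
  · infer_instance
  · rw [hkernel]
    rw [finrank_bot, finrank_zero_of_subsingleton]

end SpectralPartition

open SpectralPartition in
/-- Generalized Weyl's theorem implies Weyl's theorem. -/
theorem gen_weyl_implies_weyl {X : Type*} [NormedAddCommGroup X] [NormedSpace ℂ X]
    [CompleteSpace X] (T : X →L[ℂ] X)
    (hU : spectrum ℂ T = σBW T ∪ Espec T) (hD : σBW T ∩ Espec T = ∅) :
    spectrum ℂ T = σW T ∪ E0spec T ∧ σW T ∩ E0spec T = ∅ := by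
  constructor
  · apply Set.Subset.antisymm
    · intro l hl
      by_cases hw : l ∈ σW T
      · exact Or.inl hw
      · have hWeyl : IsWeyl (lam T l) := not_not.mp hw
        have hBW : IsBWeyl (lam T l) := weyl_to_bweyl (lam T l) hWeyl
        have hnb : l ∉ σBW T := not_not.mpr hBW
        have hE : l ∈ Espec T := by
          have hmem : l ∈ σBW T ∪ Espec T := hU ▸ hl
          rcases hmem with h | h
          · exact absurd h hnb
          · exact h
        exact Or.inr ⟨hE, hWeyl.2.1⟩
    · rintro l (hl | hl)
      · by_contra hs
        exact hl (isWeyl_of_not_spectrum T l hs)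
      · exact hl.1.2.1
  · ext l
    simp only [Set.mem_inter_iff, Set.mem_empty_iff_false, iff_false, not_and]
    intro hw hE0
    obtain ⟨hE, hfd⟩ := hE0
    have hnb : l ∉ σBW T := fun hb => (Set.eq_empty_iff_forall_notMem.mp hD l) ⟨hb, hE⟩
    have hBW : IsBWeyl (lam T l) := not_not.mp hnb
    exact hw (bweyl_to_weyl (lam T l) hBW hfd)
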